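/- Let C be a complete category, F, G : C ⇒ Set functors, α : G ⇒ F a natural transformation, and Ḡ : ∫F ⇒ Set the functor of fibres of α (sending (X, x) with x : F X to the fibre of α_X over x). Then Ḡ is continuous relative to the forgetful functor ∫F → C if and only if for every small diagram X : I → C and every limit cone L → X, the square with vertices G L, lim G X, F L, lim F X (horizontal maps the canonical comparison maps, vertical maps induced by α) is a pullback in Set. -/

import Mathlib

open CategoryTheory Limits

universe u v

universe w w₁ w₂

/-- A functor `K` on `A` is continuous relative to `U : A ⥤ B`: it maps cones whose
image under `U` is a limit cone to limit cones in `Set`. -/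
def RelativelyContinuous {A : Type w₁} [Category.{u} A] {B : Type w₂} [Category.{u} B]
    (U : A ⥤ B) (K : A ⥤ Type w) : Prop :=
  ∀ (J : Type u) [SmallCategory J] (D : J ⥤ A) (c : Cone D),
    Nonempty (IsLimit (U.mapCone c)) → Nonempty (IsLimit (K.mapCone c))

variable {C : Type v} [Category.{u} C] {F G : C ⥤ Type u}

/-- The functor of fibres of a natural transformation `α : G ⟶ F`, sending
`(X, x)` with `x : F X` to the fibre of `α_X` over `x`. -/
def fibreFunctor (α : G ⟶ F) : F.Elements ⥤ Type u where
  obj e := {y : G.obj e.1 // α.app e.1 y = e.2}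
  map {e e'} φ := TypeCat.ofHom fun y => ⟨G.map φ.val y.1, by
    rw [NatTrans.naturality_apply α φ.val, y.2, φ.2]⟩

/-- Elementwise characterization of pullback squares in `Type u`. -/
lemma types_isPullback_iff {P X Y Z : Type u} (fst : P ⟶ X) (snd : P ⟶ Y)
    (f : X ⟶ Z) (g : Y ⟶ Z) (comm : ∀ p, f (fst p) = g (snd p)) :
    IsPullback fst snd f g ↔ ∀ x y, f x = g y → ∃! p, fst p = x ∧ snd p = y := by
  constructor
  · intro h x y e
    let q : Types.PullbackObj f g := ⟨(x, y), e⟩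
    refine ⟨(PullbackCone.IsLimit.equivPullbackObj h.isLimit).symm q,
      ⟨PullbackCone.IsLimit.equivPullbackObj_symm_apply_fst h.isLimit q,
       PullbackCone.IsLimit.equivPullbackObj_symm_apply_snd h.isLimit q⟩, ?_⟩
    intro p hp
    apply (PullbackCone.IsLimit.equivPullbackObj h.isLimit).injective
    rw [Equiv.apply_symm_apply]
    ext
    · exact (PullbackCone.IsLimit.equivPullbackObj_apply_fst h.isLimit p).trans hp.1
    · exact (PullbackCone.IsLimit.equivPullbackObj_apply_snd h.isLimit p).trans hp.2
  · intro h
    refine IsPullback.of_isLimit' ⟨by ext p; exact comm p⟩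
      ((PullbackCone.isLimitEquivBijective _).symm ⟨?_, ?_⟩)
    · intro p p' hpp
      obtain ⟨q, -, hq⟩ := h (fst p) (snd p) (comm p)
      rw [hq p ⟨rfl, rfl⟩, hq p' ⟨(congrArg (·.1.1) hpp).symm, (congrArg (·.1.2) hpp).symm⟩]
    · rintro ⟨⟨x, y⟩, e⟩
      obtain ⟨p, hp, -⟩ := h x y e
      exact ⟨p, Subtype.ext (Prod.ext hp.1 hp.2)⟩

/-- The canonical square built from `α` and a cone commutes, elementwise. -/
lemma fibre_square_comm (α : G ⟶ F) {J : Type u} [SmallCategory J] (X : J ⥤ C)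
    (c : Cone X) (y : G.obj c.pt) :
    limMap (Functor.whiskerLeft X α) (limit.lift (X ⋙ G) (G.mapCone c) y) =
      limit.lift (X ⋙ F) (F.mapCone c) (α.app c.pt y) := by
  apply Types.limit_ext
  intro j
  rw [Types.Limit.map_π_apply, Types.Limit.lift_π_apply, Types.Limit.lift_π_apply]
  exact NatTrans.naturality_apply α (c.π.app j) y

theorem fibreFunctor_relativelyContinuous_iff [HasLimits C] (α : G ⟶ F) :
    RelativelyContinuous (CategoryOfElements.π F) (fibreFunctor α) ↔
      ∀ (J : Type u) [SmallCategory J] (X : J ⥤ C) (c : Cone X), IsLimit c →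
        IsPullback (limit.lift (X ⋙ G) (G.mapCone c)) (α.app c.pt)
          (limMap (Functor.whiskerLeft X α)) (limit.lift (X ⋙ F) (F.mapCone c)) := by
  constructor
  · intro hcont J _ X c hc
    rw [types_isPullback_iff _ _ _ _ (fibre_square_comm α X c)]
    intro s x e
    let D : J ⥤ F.Elements :=
      { obj := fun j => ⟨X.obj j, F.map (c.π.app j) x⟩
        map := fun {i j} φ => ⟨X.map φ, by
          dsimp
          rw [← FunctorToTypes.map_comp_apply, c.w φ]⟩
        map_id := fun j => by apply CategoryOfElements.ext; simp; rfl
        map_comp := fun φ ψ => by apply CategoryOfElements.ext; simp; rfl }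
    let c' : Cone D :=
      { pt := ⟨c.pt, x⟩
        π :=
          { app := fun j => ⟨c.π.app j, rfl⟩
            naturality := fun i j φ => by
              apply CategoryOfElements.ext
              change 𝟙 c.pt ≫ c.π.app j = c.π.app i ≫ X.map φ
              simpa [D] using (c.w φ).symm } }
    obtain ⟨hl⟩ := hcont J D c' ⟨hc⟩
    have h := (Types.isLimit_iff _).mp ⟨hl⟩
    have e' : ∀ j, α.app (X.obj j) (limit.π (X ⋙ G) j s) = F.map (c.π.app j) x := by
      intro j
      have e2 := congrArg (limit.π (X ⋙ F) j) e
      rwa [Types.Limit.map_π_apply, Types.Limit.lift_π_apply] at e2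
    let t : ∀ j, ((D ⋙ fibreFunctor α).obj j) := fun j => ⟨limit.π (X ⋙ G) j s, e' j⟩
    have ht : t ∈ (D ⋙ fibreFunctor α).sections := by
      intro i j φ
      apply Subtype.ext
      exact Types.Limit.w_apply (F := X ⋙ G) φ
    obtain ⟨y, hy1, hy2⟩ := h t ht
    refine ⟨y.1, ⟨?_, y.2⟩, ?_⟩
    · apply Types.limit_ext
      intro j
      rw [Types.Limit.lift_π_apply]
      exact congrArg Subtype.val (hy1 j)
    · rintro p ⟨hp1, hp2⟩
      have := hy2 ⟨p, hp2⟩ (fun j => Subtype.ext (by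
        have := congrArg (limit.π (X ⋙ G) j) hp1
        rwa [Types.Limit.lift_π_apply] at this))
      exact congrArg Subtype.val this
  · intro hpb J _ D c' hl'
    obtain ⟨hl⟩ := hl'
    have hP := (types_isPullback_iff _ _ _ _
      (fibre_square_comm α (D ⋙ CategoryOfElements.π F)
        ((CategoryOfElements.π F).mapCone c'))).mp
      (hpb J (D ⋙ CategoryOfElements.π F) ((CategoryOfElements.π F).mapCone c') hl)
    refine (Types.isLimit_iff _).mpr ?_
    intro s hs
    let sbar : limit ((D ⋙ CategoryOfElements.π F) ⋙ G) :=
      Types.Limit.mk _ (fun j => (s j).1) (fun i j φ => congrArg Subtype.val (hs φ))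
    have e : limMap (Functor.whiskerLeft (D ⋙ CategoryOfElements.π F) α) sbar =
        limit.lift _ (F.mapCone ((CategoryOfElements.π F).mapCone c')) c'.pt.2 := by
      apply Types.limit_ext
      intro j
      rw [Types.Limit.map_π_apply]; erw [Types.Limit.lift_π_apply (F := (D ⋙ CategoryOfElements.π F) ⋙ F)]
      show α.app (D.obj j).1 (limit.π ((D ⋙ CategoryOfElements.π F) ⋙ G) j sbar) = F.map (c'.π.app j).val c'.pt.2
      rw [show limit.π ((D ⋙ CategoryOfElements.π F) ⋙ G) j sbar = (s j).1 from Types.Limit.π_mk _ _ _ _, (s j).2]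
      exact ((c'.π.app j).2).symm
    obtain ⟨p, ⟨hp1, hp2⟩, hp3⟩ := hP sbar c'.pt.2 e
    refine ⟨⟨p, hp2⟩, fun j => Subtype.ext ?_, ?_⟩
    · show G.map (c'.π.app j).val p = (s j).1
      have := congrArg (limit.π ((D ⋙ CategoryOfElements.π F) ⋙ G) j) hp1
      rwa [Types.Limit.lift_π_apply, show limit.π ((D ⋙ CategoryOfElements.π F) ⋙ G) j sbar = (s j).1 from Types.Limit.π_mk _ _ _ _] at this
    · intro y hy
      apply Subtype.ext
      apply hp3
      refine ⟨?_, y.2⟩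
      apply Types.limit_ext
      intro j
      erw [Types.Limit.lift_π_apply]; rw [show limit.π ((D ⋙ CategoryOfElements.π F) ⋙ G) j sbar = (s j).1 from Types.Limit.π_mk _ _ _ _]
      exact congrArg Subtype.val (hy j)
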